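/- Let d ≥ 2 be an integer, 1 < α < 2, and q ≥ 1. Let b : ℝ^d → [0,∞) be measurable and let g : ℝ^{d+1} → [0,∞) be measurable with ∫_{ℝ^d} g(s,y) dy ≤ 1 for almost every s ∈ ℝ. Define the spatial convolution (b ∗ g)(t,x) := ∫_{ℝ^d} b(x − y) g(t,y) dy. Then ‖(b ∗ g)^{1/(α−1)}‖_{E_q} ≤ ‖b^{1/(α−1)}‖_{M_q}, where both sides take values in [0,∞]. -/

import Mathlib

open MeasureTheory ENNReal Set Filter

noncomputable section

/-- The spatial space `ℝ^d`. -/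
abbrev Spc (d : ℕ) := EuclideanSpace ℝ (Fin d)

/-- Parabolic cylinder `C_ρ(t,x) = {(s,y) : t ≤ s ≤ t + ρ^α, |y - x| ≤ ρ}`. -/
def cylP (d : ℕ) (α ρ t : ℝ) (x : Spc d) : Set (ℝ × Spc d) :=
  {p | t ≤ p.1 ∧ p.1 ≤ t + ρ ^ α ∧ dist p.2 x ≤ ρ}

/-- Average of `f` over the parabolic cylinder `C_ρ(t,x)`. -/
def cylAvg (d : ℕ) (α ρ t : ℝ) (x : Spc d) (f : ℝ × Spc d → ℝ≥0∞) : ℝ≥0∞ :=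
  (volume (cylP d α ρ t x))⁻¹ * ∫⁻ p in cylP d α ρ t x, f p

/-- Parabolic Morrey norm `‖v‖_{E_q}`. -/
def morreyE (d : ℕ) (α q : ℝ) (v : ℝ × Spc d → ℝ≥0∞) : ℝ≥0∞ :=
  ⨆ (ρ : ℝ) (_ : 0 < ρ) (t : ℝ) (x : Spc d),
    ENNReal.ofReal ρ * (cylAvg d α ρ t x (fun p => v p ^ q)) ^ (1 / q)

/-- Elliptic Morrey norm `‖w‖_{M_q}` on `ℝ^d`. -/
def morreyM (d : ℕ) (q : ℝ) (w : Spc d → ℝ≥0∞) : ℝ≥0∞ :=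
  ⨆ (ρ : ℝ) (_ : 0 < ρ) (x : Spc d),
    ENNReal.ofReal ρ *
      ((volume (Metric.closedBall x ρ))⁻¹ *
        ∫⁻ y in Metric.closedBall x ρ, w y ^ q) ^ (1 / q)

/-- Fractional (parabolic) maximal function `M_β f(t,x)`. -/
def maxFun (d : ℕ) (α β : ℝ) (f : ℝ × Spc d → ℝ≥0∞) (t : ℝ) (x : Spc d) : ℝ≥0∞ :=
  ⨆ (ρ : ℝ) (_ : 0 < ρ), ENNReal.ofReal (ρ ^ β) * cylAvg d α ρ t x f

/-- Uncentered parabolic maximal function `M̂ f(z)`, sup over all parabolic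
cylinders containing `z`. -/
def hatM (d : ℕ) (α : ℝ) (f : ℝ × Spc d → ℝ≥0∞) (z : ℝ × Spc d) : ℝ≥0∞ :=
  ⨆ (ρ : ℝ) (_ : 0 < ρ) (t : ℝ) (x : Spc d) (_ : z ∈ cylP d α ρ t x),
    cylAvg d α ρ t x f

/-- The kernel `p_γ(s,y) = 1_{s>0} s^{γ/2} min(|y|^{-d-α}, s^{-(d+α)/α})`. -/
def pKer (d : ℕ) (α γ : ℝ) (s : ℝ) (y : Spc d) : ℝ≥0∞ :=
  if 0 < s then
    (if s ^ (1 / α) ≤ ‖y‖ then ENNReal.ofReal (s ^ (γ / 2) * ‖y‖ ^ (-(d : ℝ) - α))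
     else ENNReal.ofReal (s ^ (γ / 2 - ((d : ℝ) + α) / α)))
  else 0

/-- `P_γ f(t,x) = ∫ p_γ(s,y) f(t+s, x+y) dy ds`. -/
def Pop (d : ℕ) (α γ : ℝ) (f : ℝ × Spc d → ℝ≥0∞) (t : ℝ) (x : Spc d) : ℝ≥0∞ :=
  ∫⁻ p : ℝ × Spc d, pKer d α γ p.1 p.2 * f (t + p.1, x + p.2)

/-- `P*_γ f(t,x) = ∫ p_γ(s,y) f(t-s, x+y) dy ds`. -/
def PopStar (d : ℕ) (α γ : ℝ) (f : ℝ × Spc d → ℝ≥0∞) (t : ℝ) (x : Spc d) : ℝ≥0∞ :=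
  ∫⁻ p : ℝ × Spc d, pKer d α γ p.1 p.2 * f (t - p.1, x + p.2)



/-- Jensen-type inequality: for a (sub-probability) measure `μ` and `p > 1`,
`(∫⁻ h ∂μ) ^ p ≤ ∫⁻ h ^ p ∂μ`. -/
lemma jensen_aux {X : Type*} [MeasurableSpace X] (μ : Measure X) {p : ℝ} (hp : 1 < p)
    (hμ : μ Set.univ ≤ 1) {h : X → ℝ≥0∞} (hh : AEMeasurable h μ) :
    (∫⁻ x, h x ∂μ) ^ p ≤ ∫⁻ x, h x ^ p ∂μ := by
  have hp0 : (0:ℝ) < p := lt_trans one_pos hp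
  have hpq := Real.HolderConjugate.conjExponent hp
  have h1 : (∫⁻ x, h x ∂μ) ≤ (∫⁻ x, h x ^ p ∂μ) ^ (1/p) := by
    have H := ENNReal.lintegral_mul_le_Lp_mul_Lq μ hpq hh
      (aemeasurable_const : AEMeasurable (fun _ : X => (1:ℝ≥0∞)) μ)
    simp only [Pi.mul_apply, mul_one, ENNReal.one_rpow, lintegral_const, one_mul] at H
    calc (∫⁻ x, h x ∂μ)
        ≤ (∫⁻ x, h x ^ p ∂μ) ^ (1/p) * (μ Set.univ) ^ (1 / p.conjExponent) := H
      _ ≤ (∫⁻ x, h x ^ p ∂μ) ^ (1/p) * 1 := by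
          refine mul_le_mul_right (ENNReal.rpow_le_one hμ ?_) _
          exact one_div_nonneg.mpr hpq.symm.nonneg
      _ = (∫⁻ x, h x ^ p ∂μ) ^ (1/p) := mul_one _
  calc (∫⁻ x, h x ∂μ) ^ p ≤ ((∫⁻ x, h x ^ p ∂μ) ^ (1/p)) ^ p :=
        ENNReal.rpow_le_rpow h1 hp0.le
    _ = ∫⁻ x, h x ^ p ∂μ := by
        rw [← ENNReal.rpow_mul, one_div, inv_mul_cancel₀ hp0.ne', ENNReal.rpow_one]

/-- Young-type inequality for Morrey norms: if `∫ g(s,·) ≤ 1` for a.e. `s`,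
then `‖(b ∗ g)^{1/(α-1)}‖_{E_q} ≤ ‖b^{1/(α-1)}‖_{M_q}` (spatial convolution). -/
theorem stmt_11 (d : ℕ) (hd : 2 ≤ d) (α q : ℝ) (hα1 : 1 < α) (hα2 : α < 2) (hq : 1 ≤ q)
    (b : Spc d → ℝ) (hb : Measurable b) (hb0 : ∀ x, 0 ≤ b x)
    (g : ℝ × Spc d → ℝ) (hg : Measurable g) (hg0 : ∀ z, 0 ≤ g z)
    (hmass : ∀ᵐ s : ℝ, (∫⁻ y : Spc d, ENNReal.ofReal (g (s, y))) ≤ 1) :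
    morreyE d α q
        (fun z =>
          (∫⁻ y : Spc d, ENNReal.ofReal (b (z.2 - y)) * ENNReal.ofReal (g (z.1, y)))
            ^ (1 / (α - 1))) ≤
      morreyM d q (fun x => ENNReal.ofReal (b x) ^ (1 / (α - 1)))  := by
  have hq0 : (0:ℝ) < q := one_pos.trans_le hq
  have hα0 : (0:ℝ) < α - 1 := by linarith
  have hr1 : (1:ℝ) < 1 / (α - 1) := by
    rw [lt_div_iff₀ hα0]; linarith
  set r : ℝ := 1 / (α - 1) with hrdef
  set p : ℝ := r * q with hpdef
  have hp1 : (1:ℝ) < p := by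
    calc (1:ℝ) < r := hr1
      _ = r * 1 := (mul_one r).symm
      _ ≤ r * q := mul_le_mul_of_nonneg_left hq (one_pos.trans hr1).le
  have hp0 : (0:ℝ) < p := one_pos.trans hp1
  have hBmeas : Measurable (fun u : Spc d => ENNReal.ofReal (b u)) :=
    ENNReal.measurable_ofReal.comp hb
  have hGmeas : Measurable (fun z : ℝ × Spc d => ENNReal.ofReal (g z)) :=
    ENNReal.measurable_ofReal.comp hg
  set M := morreyM d q (fun x => ENNReal.ofReal (b x) ^ r) with hMdef
  rcases eq_or_ne M ⊤ with hMtop | hMtop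
  · rw [hMtop]; exact le_top
  set conv : ℝ × Spc d → ℝ≥0∞ :=
    fun z => ∫⁻ y, ENNReal.ofReal (b (z.2 - y)) * ENNReal.ofReal (g (z.1, y)) with hconvdef
  have hker : Measurable (fun w : (ℝ × Spc d) × Spc d =>
      ENNReal.ofReal (b (w.1.2 - w.2)) * ENNReal.ofReal (g (w.1.1, w.2))) :=
    ((hBmeas.comp ((measurable_snd.comp measurable_fst).sub measurable_snd))).mul
      (hGmeas.comp ((measurable_fst.comp measurable_fst).prodMk measurable_snd))
  have hconvmeas : Measurable conv := hker.lintegral_prod_right'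
  rw [morreyE]
  refine iSup_le fun ρ => iSup_le fun hρ => iSup_le fun t => iSup_le fun x => ?_
  have ha0 : ENNReal.ofReal ρ ≠ 0 := by
    simp [ENNReal.ofReal_eq_zero, not_le, hρ]
  have hatop : ENNReal.ofReal ρ ≠ ⊤ := ENNReal.ofReal_ne_top
  set K : ℝ≥0∞ := (M / ENNReal.ofReal ρ) ^ q with hKdef
  have hKtop : K ≠ ⊤ :=
    ENNReal.rpow_ne_top_of_nonneg hq0.le (ENNReal.div_lt_top hMtop ha0).ne
  have hballvol_pos : ∀ c : Spc d, volume (Metric.closedBall c ρ) ≠ 0 :=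
    fun c => (Metric.measure_closedBall_pos volume c hρ).ne'
  have hballvol_top : ∀ c : Spc d, volume (Metric.closedBall c ρ) ≠ ⊤ :=
    fun c => measure_closedBall_lt_top.ne
  -- Morrey ball bound
  have hball : ∀ c : Spc d,
      (∫⁻ u in Metric.closedBall c ρ, ENNReal.ofReal (b u) ^ p)
        ≤ volume (Metric.closedBall c ρ) * K := by
    intro c
    have hWq : (∫⁻ u in Metric.closedBall c ρ, (ENNReal.ofReal (b u) ^ r) ^ q)
        = ∫⁻ u in Metric.closedBall c ρ, ENNReal.ofReal (b u) ^ p :=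
      lintegral_congr fun u => by rw [hpdef, ENNReal.rpow_mul]
    have h1 : ENNReal.ofReal ρ *
        ((volume (Metric.closedBall c ρ))⁻¹ *
          ∫⁻ u in Metric.closedBall c ρ, ENNReal.ofReal (b u) ^ p) ^ (1/q) ≤ M := by
      rw [hMdef, morreyM, ← hWq]
      exact le_iSup_of_le ρ (le_iSup_of_le hρ (le_iSup_of_le c le_rfl))
    have h2a : ((volume (Metric.closedBall c ρ))⁻¹ *
          ∫⁻ u in Metric.closedBall c ρ, ENNReal.ofReal (b u) ^ p) ^ (1/q)
            ≤ M / ENNReal.ofReal ρ := by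
      rw [ENNReal.le_div_iff_mul_le (Or.inl ha0) (Or.inl hatop), mul_comm]
      exact h1
    have h2 : ((volume (Metric.closedBall c ρ))⁻¹ *
          ∫⁻ u in Metric.closedBall c ρ, ENNReal.ofReal (b u) ^ p) ≤ K := by
      calc ((volume (Metric.closedBall c ρ))⁻¹ *
            ∫⁻ u in Metric.closedBall c ρ, ENNReal.ofReal (b u) ^ p)
          = (((volume (Metric.closedBall c ρ))⁻¹ *
            ∫⁻ u in Metric.closedBall c ρ, ENNReal.ofReal (b u) ^ p) ^ (1/q)) ^ q := by
            rw [← ENNReal.rpow_mul, one_div, inv_mul_cancel₀ hq0.ne', ENNReal.rpow_one]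
        _ ≤ (M / ENNReal.ofReal ρ) ^ q := ENNReal.rpow_le_rpow h2a hq0.le
    calc (∫⁻ u in Metric.closedBall c ρ, ENNReal.ofReal (b u) ^ p)
        = volume (Metric.closedBall c ρ) * ((volume (Metric.closedBall c ρ))⁻¹ *
            ∫⁻ u in Metric.closedBall c ρ, ENNReal.ofReal (b u) ^ p) := by
          rw [← mul_assoc, ENNReal.mul_inv_cancel (hballvol_pos c) (hballvol_top c), one_mul]
      _ ≤ volume (Metric.closedBall c ρ) * K := mul_le_mul_right h2 _
  -- geometry of the cylinder
  have hCset : cylP d α ρ t x = Icc t (t + ρ ^ α) ×ˢ Metric.closedBall x ρ := by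
    ext z
    simp [cylP, Set.mem_prod, Metric.mem_closedBall, and_assoc]
  have hvolC : volume (cylP d α ρ t x)
      = ENNReal.ofReal (ρ ^ α) * volume (Metric.closedBall x ρ) := by
    rw [hCset, Measure.volume_eq_prod, Measure.prod_prod, Real.volume_Icc,
      add_sub_cancel_left]
  have hρα : (0:ℝ) < ρ ^ α := Real.rpow_pos_of_pos hρ α
  have hvolC0 : volume (cylP d α ρ t x) ≠ 0 := by
    rw [hvolC]
    exact mul_ne_zero (by simp [ENNReal.ofReal_eq_zero, not_le, hρα]) (hballvol_pos x)
  have hvolCtop : volume (cylP d α ρ t x) ≠ ⊤ :=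
    by rw [hvolC]; exact ENNReal.mul_ne_top ENNReal.ofReal_ne_top (hballvol_top x)
  -- main integral bound
  have hmain : (∫⁻ z in cylP d α ρ t x, conv z ^ p)
      ≤ volume (cylP d α ρ t x) * K := by
    have hsplit : (∫⁻ z in cylP d α ρ t x, conv z ^ p)
        = ∫⁻ s in Icc t (t + ρ ^ α),
            ∫⁻ z2 in Metric.closedBall x ρ, conv (s, z2) ^ p := by
      rw [hCset, Measure.volume_eq_prod, ← Measure.prod_restrict]
      exact lintegral_prod _ ((hconvmeas.pow_const p).aemeasurable)
    rw [hsplit]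
    have hstep : ∀ᵐ s : ℝ, (∫⁻ z2 in Metric.closedBall x ρ, conv (s, z2) ^ p)
        ≤ volume (Metric.closedBall x ρ) * K := by
      filter_upwards [hmass] with s hs
      have hGs : Measurable (fun y : Spc d => ENNReal.ofReal (g (s, y))) :=
        hGmeas.comp (measurable_prodMk_left)
      -- Jensen for each z2
      have hjen : ∀ z2 : Spc d, conv (s, z2) ^ p
          ≤ ∫⁻ y, ENNReal.ofReal (b (z2 - y)) ^ p * ENNReal.ofReal (g (s, y)) := by
        intro z2
        set μ : Measure (Spc d) :=
          volume.withDensity (fun y => ENNReal.ofReal (g (s, y))) with hμ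
        have hμuniv : μ Set.univ ≤ 1 := by
          rw [hμ, withDensity_apply _ MeasurableSet.univ, Measure.restrict_univ]
          exact hs
        have hh : Measurable (fun y : Spc d => ENNReal.ofReal (b (z2 - y))) :=
          hBmeas.comp (measurable_const.sub measurable_id)
        have hconv_eq : conv (s, z2) = ∫⁻ y, ENNReal.ofReal (b (z2 - y)) ∂μ := by
          rw [hμ, lintegral_withDensity_eq_lintegral_mul _ hGs hh]
          exact lintegral_congr fun y => mul_comm _ _
        have hp_eq : (∫⁻ y, ENNReal.ofReal (b (z2 - y)) ^ p ∂μ)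
            = ∫⁻ y, ENNReal.ofReal (b (z2 - y)) ^ p * ENNReal.ofReal (g (s, y)) := by
          rw [hμ, lintegral_withDensity_eq_lintegral_mul _ hGs (hh.pow_const p)]
          exact lintegral_congr fun y => mul_comm _ _
        rw [hconv_eq, ← hp_eq]
        exact jensen_aux μ hp1 hμuniv hh.aemeasurable
      calc (∫⁻ z2 in Metric.closedBall x ρ, conv (s, z2) ^ p)
          ≤ ∫⁻ z2 in Metric.closedBall x ρ,
              ∫⁻ y, ENNReal.ofReal (b (z2 - y)) ^ p * ENNReal.ofReal (g (s, y)) :=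
            lintegral_mono fun z2 => hjen z2
        _ = ∫⁻ y, ∫⁻ z2 in Metric.closedBall x ρ,
              ENNReal.ofReal (b (z2 - y)) ^ p * ENNReal.ofReal (g (s, y)) := by
            apply lintegral_lintegral_swap
            exact (((hBmeas.comp (measurable_fst.sub measurable_snd)).pow_const p).mul
              (hGs.comp measurable_snd)).aemeasurable
        _ = ∫⁻ y, ENNReal.ofReal (g (s, y)) *
              ∫⁻ z2 in Metric.closedBall x ρ, ENNReal.ofReal (b (z2 - y)) ^ p := by
            refine lintegral_congr fun y => ?_
            rw [← lintegral_const_mul' _ _ ENNReal.ofReal_ne_top]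
            exact lintegral_congr fun z2 => mul_comm _ _
        _ ≤ ∫⁻ y, ENNReal.ofReal (g (s, y)) * (volume (Metric.closedBall x ρ) * K) := by
            refine lintegral_mono fun y => mul_le_mul_right ?_ _
            have hmp : MeasurePreserving (fun u : Spc d => u + y) volume volume :=
              measurePreserving_add_right volume y
            have hemb : MeasurableEmbedding (fun u : Spc d => u + y) :=
              (MeasurableEquiv.addRight y).measurableEmbedding
            have htr := hmp.setLIntegral_comp_preimage_emb hemb
              (fun z2 => ENNReal.ofReal (b (z2 - y)) ^ p) (Metric.closedBall x ρ)
            have hpre : (fun u : Spc d => u + y) ⁻¹' Metric.closedBall x ρ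
                = Metric.closedBall (x - y) ρ := by
              ext u
              simp only [Set.mem_preimage, Metric.mem_closedBall, dist_eq_norm]
              constructor <;> intro h <;>
                [ (have : u - (x - y) = u + y - x := by abel); (have : u + y - x = u - (x - y) := by abel) ] <;>
                rw [this] <;> exact h
            rw [hpre] at htr
            have htr2 : (∫⁻ z2 in Metric.closedBall x ρ, ENNReal.ofReal (b (z2 - y)) ^ p)
                = ∫⁻ u in Metric.closedBall (x - y) ρ, ENNReal.ofReal (b u) ^ p := by
              rw [← htr]
              exact lintegral_congr fun u => by rw [add_sub_cancel_right]
            rw [htr2]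
            calc (∫⁻ u in Metric.closedBall (x - y) ρ, ENNReal.ofReal (b u) ^ p)
                ≤ volume (Metric.closedBall (x - y) ρ) * K := hball (x - y)
              _ = volume (Metric.closedBall x ρ) * K := by
                  rw [Measure.addHaar_closedBall_center volume (x - y),
                    Measure.addHaar_closedBall_center volume x]
        _ = (∫⁻ y, ENNReal.ofReal (g (s, y))) * (volume (Metric.closedBall x ρ) * K) :=
            lintegral_mul_const' _ _ (ENNReal.mul_ne_top (hballvol_top x) hKtop)
        _ ≤ 1 * (volume (Metric.closedBall x ρ) * K) := mul_le_mul_left hs _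
        _ = volume (Metric.closedBall x ρ) * K := one_mul _
    calc (∫⁻ s in Icc t (t + ρ ^ α),
            ∫⁻ z2 in Metric.closedBall x ρ, conv (s, z2) ^ p)
        ≤ ∫⁻ _ in Icc t (t + ρ ^ α), volume (Metric.closedBall x ρ) * K :=
          lintegral_mono_ae (ae_restrict_of_ae hstep)
      _ = volume (Metric.closedBall x ρ) * K * volume (Icc t (t + ρ ^ α)) :=
          setLIntegral_const _ _
      _ = volume (cylP d α ρ t x) * K := by
          rw [hvolC, Real.volume_Icc, add_sub_cancel_left]; ring
  -- put things together
  have havg : cylAvg d α ρ t x (fun z => (conv z ^ r) ^ q) ≤ K := by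
    rw [cylAvg]
    have hfix : (∫⁻ z in cylP d α ρ t x, (conv z ^ r) ^ q)
        = ∫⁻ z in cylP d α ρ t x, conv z ^ p :=
      lintegral_congr fun z => by rw [hpdef, ENNReal.rpow_mul]
    rw [hfix]
    calc (volume (cylP d α ρ t x))⁻¹ * ∫⁻ z in cylP d α ρ t x, conv z ^ p
        ≤ (volume (cylP d α ρ t x))⁻¹ * (volume (cylP d α ρ t x) * K) :=
          mul_le_mul_right hmain _
      _ = K := by rw [← mul_assoc, ENNReal.inv_mul_cancel hvolC0 hvolCtop, one_mul]
  show ENNReal.ofReal ρ * cylAvg d α ρ t x (fun z => (conv z ^ r) ^ q) ^ (1/q) ≤ M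
  calc ENNReal.ofReal ρ * cylAvg d α ρ t x (fun z => (conv z ^ r) ^ q) ^ (1/q)
      ≤ ENNReal.ofReal ρ * K ^ (1/q) :=
        mul_le_mul_right (ENNReal.rpow_le_rpow havg (one_div_nonneg.mpr hq0.le)) _
    _ = ENNReal.ofReal ρ * (M / ENNReal.ofReal ρ) := by
        rw [hKdef, ← ENNReal.rpow_mul, mul_one_div, div_self hq0.ne', ENNReal.rpow_one]
    _ = M := ENNReal.mul_div_cancel ha0 hatop
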